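/- Let p be a prime and let K⁺ be a complete discrete valuation ring of characteristic zero whose residue field is perfect of characteristic p. Let π be a uniformizer of K⁺, let K̄ be an algebraic closure of the fraction field of K⁺, and fix a sequence (π_n)_{n≥0} of elements of K̄ with π_0 = π and (π_{n+1})^p = π_n for all n. Let K⁺_∞ be the K⁺-subalgebra of K̄ generated by all the π_n (equivalently, the increasing union of the subrings K⁺[π_n]). Then the Frobenius endomorphism of K⁺_∞/pK⁺_∞ is surjective. -/

import Mathlib

/-- In a commutative ring where `p = 0`, a `p`-th power of a sum is the sum of the
`p`-th powers (for `p` prime). -/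
lemma aux_sum_pow_eq_pow_sum {Q : Type*} [CommRing Q] {p : ℕ} (hp : p.Prime)
    (hp0 : (p : Q) = 0) {ι : Type*} (s : Finset ι) (x : ι → Q) :
    (∑ k ∈ s, x k) ^ p = ∑ k ∈ s, x k ^ p := by
  classical
  induction s using Finset.induction with
  | empty => simp [zero_pow hp.ne_zero]
  | @insert a s h ih =>
      rw [Finset.sum_insert h, Finset.sum_insert h, ← ih]
      obtain ⟨r, hr⟩ := exists_add_pow_prime_eq hp (x a) (∑ k ∈ s, x k)
      rw [hr, hp0, zero_mul, zero_mul, zero_mul, add_zero]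

set_option maxHeartbeats 1000000 in
set_option synthInstance.maxHeartbeats 1000000 in
/-- Let `p` be a prime and `K⁺` a complete discrete valuation ring of
characteristic zero with perfect residue field of characteristic `p`.  Let `π` be a
uniformizer of `K⁺`, `K̄` an algebraic closure of the fraction field of `K⁺`, and
`(π_n)` a sequence in `K̄` with `π_0 = π` and `π_{n+1} ^ p = π_n`.  Let `K⁺_∞` be the
`K⁺`-subalgebra of `K̄` generated by all the `π_n` (the subring generated by the image
of `K⁺` together with the `π_n`).  Then the Frobenius endomorphism of
`K⁺_∞ / p K⁺_∞` is surjective. -/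
theorem statement6 (p : ℕ) [Fact p.Prime]
    (Kp : Type*) [CommRing Kp] [IsDomain Kp] [IsDiscreteValuationRing Kp] [CharZero Kp]
    [IsAdicComplete (IsLocalRing.maximalIdeal Kp) Kp]
    [CharP (IsLocalRing.ResidueField Kp) p]
    (hperf : Function.Bijective fun x : IsLocalRing.ResidueField Kp => x ^ p)
    (π : Kp) (hπ : Irreducible π)
    (Kbar : Type*) [Field Kbar] [Algebra (FractionRing Kp) Kbar]
    [IsAlgClosure (FractionRing Kp) Kbar]
    (πseq : ℕ → Kbar)
    (hπ0 : πseq 0 = (algebraMap (FractionRing Kp) Kbar)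
      (algebraMap Kp (FractionRing Kp) π))
    (hπs : ∀ n, πseq (n + 1) ^ p = πseq n) :
    Function.Surjective fun x :
        (Subring.closure (Set.range πseq ∪
          Set.range ((algebraMap (FractionRing Kp) Kbar).comp
            (algebraMap Kp (FractionRing Kp))))) ⧸
        (Ideal.span {(p : Subring.closure (Set.range πseq ∪
          Set.range ((algebraMap (FractionRing Kp) Kbar).comp
            (algebraMap Kp (FractionRing Kp)))))}) => x ^ p := by
  classical
  have hp : p.Prime := Fact.out
  set f : Kp →+* Kbar :=
    ((algebraMap (FractionRing Kp) Kbar).comp (algebraMap Kp (FractionRing Kp))) with hf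
  set R : Subring Kbar := Subring.closure (Set.range πseq ∪ Set.range f) with hRdef
  set I : Ideal R := Ideal.span {(p : R)} with hIdef
  have hmemf : ∀ a : Kp, f a ∈ R := fun a => Subring.subset_closure (Or.inr ⟨a, rfl⟩)
  have hmemπ : ∀ n, πseq n ∈ R := fun n => Subring.subset_closure (Or.inl ⟨n, rfl⟩)
  have hp0 : (p : R ⧸ I) = 0 := by
    rw [← map_natCast (Ideal.Quotient.mk I) p, Ideal.Quotient.eq_zero_iff_mem]
    exact Ideal.subset_span rfl
  -- Step A: every element of Kp is a p-th power modulo π.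
  have stepA : ∀ a : Kp, ∃ b c : Kp, a = b ^ p + π * c := by
    intro a
    obtain ⟨y, hy⟩ := hperf.2 (IsLocalRing.residue Kp a)
    obtain ⟨b, rfl⟩ := Ideal.Quotient.mk_surjective y
    have hmem : a - b ^ p ∈ IsLocalRing.maximalIdeal Kp := by
      rw [← Ideal.Quotient.eq_zero_iff_mem]
      have : (Ideal.Quotient.mk (IsLocalRing.maximalIdeal Kp)) (a - b ^ p)
          = IsLocalRing.residue Kp a - (Ideal.Quotient.mk _ b) ^ p := by
        rw [map_sub, map_pow]; rfl
      rw [this, show (Ideal.Quotient.mk (IsLocalRing.maximalIdeal Kp) b) ^ p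
        = IsLocalRing.residue Kp a from hy]; exact sub_self _
    rw [hπ.maximalIdeal_eq, Ideal.mem_span_singleton] at hmem
    obtain ⟨c, hc⟩ := hmem
    exact ⟨b, c, by rw [← hc]; ring⟩
  -- Step B: every element of Kp is a sum of p-th powers times powers of π, modulo π^m.
  have stepB : ∀ (m : ℕ) (a : Kp), ∃ (g : ℕ → Kp) (r : Kp),
      a = (∑ k ∈ Finset.range m, g k ^ p * π ^ k) + π ^ m * r := by
    intro m
    induction m with
    | zero => exact fun a => ⟨fun _ => 0, a, by simp⟩
    | succ m ih =>
        intro a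
        obtain ⟨b, c, hbc⟩ := stepA a
        obtain ⟨g, r, hgr⟩ := ih c
        refine ⟨fun k => if k = 0 then b else g (k - 1), r, ?_⟩
        rw [Finset.sum_range_succ']
        simp only [Nat.succ_ne_zero, if_false, if_pos rfl, Nat.add_sub_cancel]
        calc a = b ^ p + π * ((∑ k ∈ Finset.range m, g k ^ p * π ^ k) + π ^ m * r) := by
                rw [← hgr, ← hbc]
          _ = (∑ k ∈ Finset.range m, g k ^ p * π ^ (k + 1)) + b ^ p * π ^ 0
              + π ^ (m + 1) * r := by
                rw [mul_add, Finset.mul_sum,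
                  Finset.sum_congr rfl
                    (fun k _ => by ring :
                      ∀ k ∈ Finset.range m, π * (g k ^ p * π ^ k) = g k ^ p * π ^ (k + 1))]
                ring
  -- p is associated to a power of π.
  have hpne : (p : Kp) ≠ 0 := Nat.cast_ne_zero.mpr hp.ne_zero
  obtain ⟨e, u, hu⟩ := IsDiscreteValuationRing.associated_pow_irreducible hpne hπ
  have hπ1 : f π = πseq 1 ^ p := by rw [hπs 0, hπ0, hf, RingHom.comp_apply]
  -- Key: images of Kp are p-th powers in the quotient.
  have keyK : ∀ a : Kp, ∃ z : R ⧸ I, z ^ p = Ideal.Quotient.mk I ⟨f a, hmemf a⟩ := by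
    intro a
    obtain ⟨g, r, hgr⟩ := stepB e a
    set z : ℕ → R := fun k =>
      (⟨f (g k) * πseq 1 ^ k, mul_mem (hmemf _) (pow_mem (hmemπ 1) k)⟩ : R) with hz
    have hval : (f a : Kbar)
        = (∑ k ∈ Finset.range e, (f (g k) * πseq 1 ^ k) ^ p) + (p : Kbar) * f (↑u * r) := by
      have h1 : ∀ k, (f (g k) * πseq 1 ^ k) ^ p = f (g k ^ p * π ^ k) := by
        intro k
        rw [mul_pow, ← pow_mul, mul_comm k p, pow_mul, ← hπ1, map_mul, map_pow, map_pow]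
      rw [Finset.sum_congr rfl fun k _ => h1 k, ← map_sum, ← map_natCast f p, ← map_mul,
        ← map_add]
      congr 1
      rw [hgr]
      congr 1
      rw [← hu]; ring
    have hdiff : (⟨f a, hmemf a⟩ : R) =
        (∑ k ∈ Finset.range e, z k ^ p) + (p : R) * ⟨f (↑u * r), hmemf _⟩ := by
      apply Subtype.ext
      push_cast
      exact hval
    refine ⟨∑ k ∈ Finset.range e, Ideal.Quotient.mk I (z k), ?_⟩
    rw [aux_sum_pow_eq_pow_sum hp hp0]
    calc ∑ k ∈ Finset.range e, (Ideal.Quotient.mk I (z k)) ^ p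
        = Ideal.Quotient.mk I (∑ k ∈ Finset.range e, z k ^ p) := by
          rw [map_sum]
          exact Finset.sum_congr rfl fun k _ => (map_pow _ _ _).symm
      _ = Ideal.Quotient.mk I ⟨f a, hmemf a⟩ := by
          rw [hdiff, map_add, map_mul, map_natCast, hp0, zero_mul, add_zero]
  -- (-1) is a p-th power compatible fact
  have hneg1 : ((-1 : R ⧸ I)) ^ p = -1 := by
    rcases hp.eq_two_or_odd' with h2 | hodd
    · subst h2
      have h20 : (1 : R ⧸ I) + 1 = 0 := by
        rw [one_add_one_eq_two, ← Nat.cast_ofNat (n := 2)]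
        exact hp0
      linear_combination h20
    · exact Odd.neg_one_pow (α := R ⧸ I) hodd
  -- Main induction over the closure.
  intro x
  obtain ⟨y, rfl⟩ := Ideal.Quotient.mk_surjective x
  obtain ⟨y, hy⟩ := y
  refine Subring.closure_induction
    (p := fun y hy => ∃ z : R ⧸ I, z ^ p = Ideal.Quotient.mk I ⟨y, hy⟩) ?_ ?_ ?_ ?_ ?_ ?_ hy
  · rintro x (⟨n, rfl⟩ | ⟨a, rfl⟩)
    · refine ⟨Ideal.Quotient.mk I ⟨πseq (n + 1), hmemπ _⟩, ?_⟩
      rw [← map_pow]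
      exact congrArg _ (Subtype.ext (by push_cast; exact hπs n))
    · exact keyK a
  · exact ⟨0, by rw [zero_pow hp.ne_zero]; exact (map_zero _).symm⟩
  · exact ⟨1, by rw [one_pow]; exact (map_one _).symm⟩
  · rintro a b ha hb ⟨za, hza⟩ ⟨zb, hzb⟩
    obtain ⟨r, hr⟩ := exists_add_pow_prime_eq hp za zb
    refine ⟨za + zb, ?_⟩
    rw [hr, hp0, zero_mul, zero_mul, zero_mul, add_zero, hza, hzb, ← map_add]
    exact congrArg _ (Subtype.ext rfl)
  · rintro a ha ⟨za, hza⟩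
    refine ⟨-za, ?_⟩
    rw [show -za = -1 * za by ring, mul_pow, hneg1, hza,
      neg_one_mul (a := Ideal.Quotient.mk I ⟨a, ha⟩), ← map_neg]
    exact congrArg _ (Subtype.ext rfl)
  · rintro a b ha hb ⟨za, hza⟩ ⟨zb, hzb⟩
    refine ⟨za * zb, ?_⟩
    rw [mul_pow, hza, hzb, ← map_mul]
    exact congrArg _ (Subtype.ext rfl)
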